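/- Let (V, g) be a real inner product space of dimension at least 3. If B : V × V → ℝ is an alternating bilinear form such that B(A v, A w) = B(v, w) for every g-isometry A of V with det A = 1 (i.e. every A ∈ SO(V, g)), then B = 0. -/

import Mathlib

local notation "⟪" x ", " y "⟫_ℝ" => @inner ℝ _ _ x y
open Module Submodule

-- key lemma: B v w = 0 when v ⊥ w and there's a unit u ⊥ v, w with ‖w‖ = 1
lemma key5 (V : Type*) [NormedAddCommGroup V] [InnerProductSpace ℝ V]
    [FiniteDimensional ℝ V]
    (B : V →ₗ[ℝ] V →ₗ[ℝ] ℝ)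
    (hinv : ∀ A : V ≃ₗ[ℝ] V,
      (∀ x y : V, inner ℝ (A x) (A y) = (inner ℝ x y : ℝ)) →
      LinearMap.det (A : V →ₗ[ℝ] V) = 1 →
      ∀ v w : V, B (A v) (A w) = B v w)
    (v w u : V) (hvw : ⟪v, w⟫_ℝ = 0) (hvu : ⟪v, u⟫_ℝ = 0) (hwu : ⟪w, u⟫_ℝ = 0)
    (hw : ‖w‖ = 1) (hu : ‖u‖ = 1) : B v w = 0 := by
  set S : Submodule ℝ V := Submodule.span ℝ ({w, u} : Set V) with hS
  have horth : Orthonormal ℝ (![w, u]) := by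
    rw [orthonormal_iff_ite]
    intro i j
    fin_cases i <;> fin_cases j <;>
      simp_all [real_inner_self_eq_norm_sq, real_inner_comm w u]
  have hrange : Set.range ![w, u] = ({w, u} : Set V) := by
    simp [Matrix.range_cons, Matrix.range_empty, Set.pair_comm]
  have hfr : finrank ℝ S = 2 := by
    rw [hS, ← hrange, finrank_span_eq_card horth.linearIndependent]
    simp
  set A : V ≃ₗᵢ[ℝ] V := reflection Sᗮ with hA
  have hdet : LinearMap.det (A.toLinearEquiv : V →ₗ[ℝ] V) = 1 := by
    have := det_reflection (𝕜 := ℝ) Sᗮ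
    rw [Submodule.orthogonal_orthogonal, hfr] at this
    rw [hA]
    simpa using this
  have hAv : A v = v := by
    apply reflection_mem_subspace_eq_self
    rw [Submodule.mem_orthogonal]
    intro x hx
    induction hx using Submodule.span_induction with
    | mem x hx =>
        rcases hx with h | h <;> subst h
        · rwa [real_inner_comm]
        · rwa [real_inner_comm]
    | zero => simp
    | add x y _ _ hx hy => rw [inner_add_left, hx, hy, add_zero]
    | smul c x _ hx => rw [inner_smul_left, hx, mul_zero]
  have hAw : A w = -w :=
    reflection_mem_subspace_orthogonal_precomplement_eq_neg
      (Submodule.subset_span (by simp))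
  have := hinv A.toLinearEquiv (fun x y => A.inner_map_map x y) hdet v w
  rw [show (A.toLinearEquiv : V → V) = A from rfl] at this
  rw [hAv, hAw, map_neg, neg_eq_iff_add_eq_zero ] at this
  linarith [this]

/-- an alternating bilinear form on a real inner product space of dimension
at least 3 which is invariant under every special orthogonal transformation vanishes. -/
theorem stmt5 (V : Type*) [NormedAddCommGroup V] [InnerProductSpace ℝ V]
    [FiniteDimensional ℝ V] (hdim : 3 ≤ Module.finrank ℝ V)
    (B : V →ₗ[ℝ] V →ₗ[ℝ] ℝ) (halt : ∀ v : V, B v v = 0)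
    (hinv : ∀ A : V ≃ₗ[ℝ] V,
      (∀ x y : V, inner ℝ (A x) (A y) = (inner ℝ x y : ℝ)) →
      LinearMap.det (A : V →ₗ[ℝ] V) = 1 →
      ∀ v w : V, B (A v) (A w) = B v w) :
    B = 0 := by
  ext v w
  simp only [LinearMap.zero_apply]
  by_cases hv : v = 0
  · simp [hv]
  -- decompose w
  set c : ℝ := ⟪v, w⟫_ℝ / ‖v‖ ^ 2 with hc
  set w₀ : V := w - c • v with hw₀
  have hvw₀ : ⟪v, w₀⟫_ℝ = 0 := by
    have hvn : ‖v‖ ≠ 0 := by simpa using hv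
    rw [hw₀, inner_sub_right, inner_smul_right, real_inner_self_eq_norm_sq, hc]
    field_simp
    ring
  have hBw : B v w = c * B v v + B v w₀ := by
    rw [hw₀, map_sub, map_smul, smul_eq_mul]; ring
  rw [hBw, halt, mul_zero, zero_add]
  by_cases hw0 : w₀ = 0
  · simp [hw0]
  -- find u orthogonal to v and w₀
  set K : Submodule ℝ V := Submodule.span ℝ ({v, w₀} : Set V) with hK
  have hKle : finrank ℝ K ≤ 2 := by
    rw [hK, show ({v, w₀} : Set V) = insert v {w₀} from rfl, Submodule.span_insert]
    refine (Submodule.finrank_add_le_finrank_add_finrank _ _).trans ?_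
    have h1 := finrank_span_le_card (R := ℝ) ({v} : Set V)
    have h2 := finrank_span_le_card (R := ℝ) ({w₀} : Set V)
    simp only [Set.toFinset_singleton, Finset.card_singleton] at h1 h2
    omega
  have hKorth : 0 < finrank ℝ Kᗮ := by
    have h := Submodule.finrank_add_finrank_orthogonal (K := K)
    omega
  have hKne : Kᗮ ≠ ⊥ := by
    intro h
    rw [h, finrank_bot] at hKorth
    exact lt_irrefl 0 hKorth
  obtain ⟨u, hu, hune⟩ := Submodule.exists_mem_ne_zero_of_ne_bot hKne
  have hvu : ⟪v, u⟫_ℝ = 0 := hu v (Submodule.subset_span (by simp))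
  have hw₀u : ⟪w₀, u⟫_ℝ = 0 := hu w₀ (Submodule.subset_span (by simp))
  -- normalize
  have hB := key5 V B hinv v (‖w₀‖⁻¹ • w₀) (‖u‖⁻¹ • u)
    (by rw [inner_smul_right, hvw₀, mul_zero])
    (by rw [inner_smul_right, hvu, mul_zero])
    (by rw [inner_smul_right, inner_smul_left, hw₀u]; ring)
    (by rw [norm_smul, norm_inv, norm_norm, inv_mul_cancel₀ (by simpa using hw0)])
    (by rw [norm_smul, norm_inv, norm_norm, inv_mul_cancel₀ (by simpa using hune)])
  rw [map_smul] at hB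
  have : B v w₀ = 0 := by
    have hn : (‖w₀‖ : ℝ) ≠ 0 := by simpa using hw0
    field_simp at hB
    simpa [smul_eq_mul, hw0] using hB
  exact this
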